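/- arXiv:1612.07554 — 2 statements merged into one kernel-verified Lean document; each statement's English description precedes it below -/
import Mathlib

section
/- Let A be the generator of a C₀-semigroup T on X and B the generator of a C₀-semigroup S on Y ⊇ X. If S(t)T(t)x = x for all x ∈ X and t ≥ 0, then B is an extension of −A, i.e. D(A) ⊆ D(B) and Bx = −Ax for all x ∈ D(A). -/
open Filter Topology

/-- A `C₀`-semigroup on a normed space. -/
structure C0Semigroup (X : Type*) [NormedAddCommGroup X] [NormedSpace ℂ X] where
  toFun : ℝ → X →L[ℂ] X
  map_zero : toFun 0 = 1
  map_add : ∀ s t : ℝ, 0 ≤ s → 0 ≤ t → toFun (s + t) = (toFun s).comp (toFun t)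
  strongly_continuous : ∀ x : X, ContinuousOn (fun t => toFun t x) (Set.Ici 0)

/-- `A` (with domain `dom`) is the generator of the `C₀`-semigroup `T`. -/
def IsGenerator {X : Type*} [NormedAddCommGroup X] [NormedSpace ℂ X]
    (T : C0Semigroup X) (dom : Set X) (A : X → X) : Prop :=
  (∀ x : X, x ∈ dom ↔
      ∃ y : X, Tendsto (fun t : ℝ => (t : ℂ)⁻¹ • (T.toFun t x - x)) (𝓝[>] 0) (𝓝 y)) ∧
  (∀ x ∈ dom, Tendsto (fun t : ℝ => (t : ℂ)⁻¹ • (T.toFun t x - x)) (𝓝[>] 0) (𝓝 (A x)))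

/-- If `S(t)T(t)x = x` for all `x ∈ X` and `t ≥ 0`, then the generator `B` of `S`
is an extension of `−A`, where `A` generates `T` on the closed subspace `X`. -/
theorem left_inverse_semigroup_implies_generator_extends_neg
    {Y : Type*} [NormedAddCommGroup Y] [NormedSpace ℂ Y] [CompleteSpace Y]
    (X : Submodule ℂ Y) [CompleteSpace X]
    (T : C0Semigroup X) (S : C0Semigroup Y)
    (domA : Set X) (Amap : X → X) (domB : Set Y) (Bmap : Y → Y)
    (hA : IsGenerator T domA Amap) (hB : IsGenerator S domB Bmap)
    (hinv : ∀ (x : X) (t : ℝ), 0 ≤ t → S.toFun t ((T.toFun t x : X) : Y) = (x : Y)) :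
    ∀ x ∈ domA, ((x : Y) ∈ domB ∧ Bmap (x : Y) = -(Amap x : Y)) := by

  intro x hx
  set Ax : Y := (Amap x : Y) with hAxdef
  -- uniform bound on ‖S(t)‖ for t ∈ [0,1]
  obtain ⟨M, hM⟩ : ∃ M, ∀ t : Set.Icc (0:ℝ) 1, ‖S.toFun t‖ ≤ M := by
    apply banach_steinhaus
    intro y
    obtain ⟨C, hC⟩ := (isCompact_Icc (a := (0:ℝ)) (b := 1)).exists_bound_of_continuousOn
      ((S.strongly_continuous y).mono (fun t ht => ht.1))
    exact ⟨C, fun t => hC t t.2⟩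
  -- the difference quotient in Y converges to Ax
  have hwX := hA.2 x hx
  have hw : Tendsto (fun t : ℝ => (t:ℂ)⁻¹ • (((T.toFun t x : X) : Y) - (x : Y)))
      (𝓝[>] 0) (𝓝 Ax) := by
    have := ((continuous_subtype_val (p := fun y => y ∈ X)).tendsto (Amap x)).comp hwX
    simpa [Function.comp_def] using this
  -- S(t) Ax → Ax
  have h0 : Tendsto (fun t : ℝ => S.toFun t Ax) (𝓝[>] 0) (𝓝 Ax) := by
    have h := ((S.strongly_continuous Ax) 0 Set.self_mem_Ici).tendsto
    rw [S.map_zero] at h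
    have := h.mono_left (nhdsWithin_mono _ Set.Ioi_subset_Ici_self)
    simpa using this
  -- S(t)(w t - Ax) → 0
  have h2 : Tendsto (fun t : ℝ =>
      S.toFun t ((t:ℂ)⁻¹ • (((T.toFun t x : X) : Y) - (x : Y)) - Ax)) (𝓝[>] 0) (𝓝 0) := by
    have hnorm : Tendsto (fun t : ℝ =>
        M * ‖(t:ℂ)⁻¹ • (((T.toFun t x : X) : Y) - (x : Y)) - Ax‖) (𝓝[>] 0) (𝓝 0) := by
      have h := (hw.sub_const Ax)
      simp only [sub_self] at h
      have := (tendsto_norm_zero.comp h).const_mul M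
      simpa using this
    apply squeeze_zero_norm' _ hnorm
    filter_upwards [Ioc_mem_nhdsGT zero_lt_one]
      with t ht
    calc ‖S.toFun t ((t:ℂ)⁻¹ • (((T.toFun t x : X) : Y) - (x : Y)) - Ax)‖
        ≤ ‖S.toFun t‖ * ‖(t:ℂ)⁻¹ • (((T.toFun t x : X) : Y) - (x : Y)) - Ax‖ :=
          (S.toFun t).le_opNorm _
      _ ≤ M * ‖(t:ℂ)⁻¹ • (((T.toFun t x : X) : Y) - (x : Y)) - Ax‖ :=
          mul_le_mul_of_nonneg_right (hM ⟨t, ⟨le_of_lt ht.1, ht.2⟩⟩) (norm_nonneg _)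
  -- hence S(t)(w t) → Ax
  have h3 : Tendsto (fun t : ℝ =>
      S.toFun t ((t:ℂ)⁻¹ • (((T.toFun t x : X) : Y) - (x : Y)))) (𝓝[>] 0) (𝓝 Ax) := by
    have := h2.add h0
    simp only [← map_add, sub_add_cancel, zero_add] at this
    exact this
  -- the difference quotient for S at x converges to -Ax
  have hfinal : Tendsto (fun t : ℝ => (t:ℂ)⁻¹ • (S.toFun t (x : Y) - (x : Y)))
      (𝓝[>] 0) (𝓝 (-Ax)) := by
    have heq : ∀ᶠ t in (𝓝[>] (0:ℝ)),
        -(S.toFun t ((t:ℂ)⁻¹ • (((T.toFun t x : X) : Y) - (x : Y))))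
          = (t:ℂ)⁻¹ • (S.toFun t (x : Y) - (x : Y)) := by
      filter_upwards [self_mem_nhdsWithin] with t ht
      have h1 := hinv x t (le_of_lt ht)
      rw [map_smul, map_sub, h1, ← smul_neg, neg_sub]
    exact Tendsto.congr' heq h3.neg
  have hmem : (x : Y) ∈ domB := (hB.1 (x : Y)).mpr ⟨-Ax, hfinal⟩
  exact ⟨hmem, tendsto_nhds_unique (hB.2 _ hmem) hfinal⟩
end

section
/- Let U be a bounded operator on a Banach space X. If there exists n ∈ ℕ such that max(‖U^{2n}x‖, ‖x‖) ≥ 2‖U^n x‖ for all x ∈ X, then the approximate point spectrum of U does not meet the unit circle. -/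
/-- If `max(‖U^{2n}x‖, ‖x‖) ≥ 2‖U^n x‖` for all `x` and some `n ≥ 1`, then the
approximate point spectrum of `U` does not meet the unit circle. -/
theorem quasi_hyperbolic_estimate_implies_no_approx_spectrum_on_circle
    {X : Type*} [NormedAddCommGroup X] [NormedSpace ℂ X] [CompleteSpace X]
    (U : X →L[ℂ] X)
    (h : ∃ n : ℕ, 0 < n ∧ ∀ x : X, 2 * ‖(U ^ n) x‖ ≤ max ‖(U ^ (2 * n)) x‖ ‖x‖) :
    ∀ l : ℂ, ‖l‖ = 1 →
      ¬(∀ ε : ℝ, 0 < ε → ∃ x : X, ‖x‖ = 1 ∧ ‖U x - l • x‖ < ε) := by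
  obtain ⟨n, hn, hU⟩ := h
  intro l hl hap
  set M : ℝ := max ‖U‖ 1 with hM
  have hM1 : (1:ℝ) ≤ M := le_max_right _ _
  have hM0 : (0:ℝ) ≤ M := by linarith
  have hUM : ‖U‖ ≤ M := le_max_left _ _
  set C : ℝ := (2*n) * M ^ (2*n) with hC
  have hCnn : 0 ≤ C := by positivity
  have hC0 : 0 < C + 1 := by positivity
  obtain ⟨x, hx, hxε⟩ := hap (1/(8*(C+1))) (by positivity)
  set ε : ℝ := 1/(8*(C+1)) with hε
  have hεpos : 0 < ε := by positivity
  have hxε' : ‖U x - l • x‖ ≤ ε := le_of_lt hxε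
  -- key estimate
  have key : ∀ k : ℕ, ‖(U ^ k) x - l ^ k • x‖ ≤ k * M ^ k * ε := by
    intro k
    induction k with
    | zero => simp
    | succ k ih =>
      have h1 : (U ^ (k+1)) x - l ^ (k+1) • x
          = U ((U ^ k) x - l ^ k • x) + l ^ k • (U x - l • x) := by
        rw [pow_succ' U k, pow_succ' l k]
        simp only [ContinuousLinearMap.mul_apply, map_sub, map_smul, smul_sub, mul_smul]
        rw [smul_comm l (l ^ k) x]
        abel
      have h2 : ‖U ((U ^ k) x - l ^ k • x)‖ ≤ M * (k * M ^ k * ε) := by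
        calc ‖U ((U ^ k) x - l ^ k • x)‖ ≤ ‖U‖ * ‖(U ^ k) x - l ^ k • x‖ :=
              U.le_opNorm _
          _ ≤ M * (k * M ^ k * ε) := by
              apply mul_le_mul hUM ih (norm_nonneg _) hM0
      have h3 : ‖l ^ k • (U x - l • x)‖ ≤ ε := by
        rw [norm_smul, norm_pow, hl, one_pow, one_mul]; exact hxε'
      have h4 : (1:ℝ) ≤ M ^ (k+1) := one_le_pow₀ hM1
      calc ‖(U ^ (k+1)) x - l ^ (k+1) • x‖
          ≤ ‖U ((U ^ k) x - l ^ k • x)‖ + ‖l ^ k • (U x - l • x)‖ := by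
            rw [h1]; exact norm_add_le _ _
        _ ≤ M * (k * M ^ k * ε) + ε := add_le_add h2 h3
        _ ≤ ((k:ℝ)+1) * M ^ (k+1) * ε := by
            have : M * (k * M ^ k * ε) = k * M ^ (k+1) * ε := by ring
            rw [this]
            nlinarith [mul_le_mul_of_nonneg_left h4 hεpos.le]
        _ = ((k+1 : ℕ):ℝ) * M ^ (k+1) * ε := by push_cast; ring
  have hMn : (n:ℝ) * M ^ n ≤ C := by
    rw [hC]
    have h1 : M ^ n ≤ M ^ (2*n) := pow_le_pow_right₀ hM1 (by omega)
    have h2 : (n:ℝ) ≤ 2*n := by linarith [Nat.cast_nonneg (α := ℝ) n]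
    nlinarith [mul_le_mul h2 h1 (pow_nonneg hM0 n) (by positivity : (0:ℝ) ≤ 2*(n:ℝ))]
  have kn := key n
  have k2n := key (2*n)
  have hCε : (n:ℝ) * M ^ n * ε ≤ C * ε := by nlinarith
  have h2C : ((2*n : ℕ):ℝ) * M ^ (2*n) * ε = C * ε := by push_cast [hC]; ring
  -- lower bound on ‖U^n x‖
  have hlow : 1 - C * ε ≤ ‖(U ^ n) x‖ := by
    have h1 : ‖l ^ n • x‖ = 1 := by rw [norm_smul, norm_pow, hl, one_pow, one_mul, hx]
    have h2 : ‖l ^ n • x‖ - ‖(U ^ n) x‖ ≤ ‖(U ^ n) x - l ^ n • x‖ := by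
      have := norm_sub_norm_le ((U ^ n) x) (l ^ n • x)
      linarith [abs_le.mp (abs_norm_sub_norm_le ((U ^ n) x) (l ^ n • x))]
    linarith
  -- upper bound on ‖U^{2n} x‖
  have hhigh : ‖(U ^ (2*n)) x‖ ≤ 1 + C * ε := by
    have h1 : ‖l ^ (2*n) • x‖ = 1 := by rw [norm_smul, norm_pow, hl, one_pow, one_mul, hx]
    have h2 : ‖(U ^ (2*n)) x‖ - ‖l ^ (2*n) • x‖ ≤ ‖(U ^ (2*n)) x - l ^ (2*n) • x‖ := by
      linarith [abs_le.mp (abs_norm_sub_norm_le ((U ^ (2*n)) x) (l ^ (2*n) • x))]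
    rw [h2C] at k2n
    linarith
  have hmain := hU x
  rw [hx] at hmain
  have hmax : max ‖(U ^ (2*n)) x‖ 1 ≤ 1 + C * ε :=
    max_le hhigh (by nlinarith)
  have hsmall : C * ε ≤ 1/8 := by
    rw [hε, mul_one_div, div_le_div_iff₀ (by linarith) (by norm_num)]
    linarith
  nlinarith [le_trans hmain hmax]
end
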